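/- arXiv:math/0112318 — 3 statements merged into one kernel-verified Lean document; each statement's English description precedes it below -/
import Mathlib

section
/- For every ε > 0 and every m ∈ ℕ there exists a constant c = c(m, ε) such that for every number field k of degree [k:ℚ] = m and every nonzero ideal a of 𝒪_k, the number t_k(a) of ideal divisors of a in 𝒪_k satisfies t_k(a) ≤ c·N_{k/ℚ}(a)^ε. -/
open NumberField

open UniqueFactorizationMonoid


-- divisor count bounded by product of (multiplicity + 1)
theorem aux_card_dvd_le {α : Type*} [CommMonoidWithZero α] [UniqueFactorizationMonoid α]
    [NormalizationMonoid α] [Unique αˣ] [DecidableEq α] (a : α) (ha : a ≠ 0) :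
    Nat.card {b : α // b ∣ a} ≤
      ∏ p ∈ (normalizedFactors a).toFinset, ((normalizedFactors a).count p + 1) := by
  classical
  set F := normalizedFactors a with hF
  have key : ∀ b : {b : α // b ∣ a}, ∀ p : α, (normalizedFactors b.1).count p ≤ F.count p := by
    rintro ⟨b, hb⟩ p
    exact Multiset.count_le_of_le p
      ((dvd_iff_normalizedFactors_le_normalizedFactors (ne_zero_of_dvd_ne_zero ha hb) ha).mp hb)
  have hinj : Function.Injective
      (fun b : {b : α // b ∣ a} =>
        (fun p : F.toFinset => (⟨(normalizedFactors b.1).count p.1,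
          Nat.lt_succ_of_le (key b p.1)⟩ : Fin (F.count p.1 + 1)))) := by
    rintro ⟨b, hb⟩ ⟨b', hb'⟩ h
    have hb0 : b ≠ 0 := ne_zero_of_dvd_ne_zero ha hb
    have hb0' : b' ≠ 0 := ne_zero_of_dvd_ne_zero ha hb'
    have hfac : normalizedFactors b = normalizedFactors b' := by
      ext x
      by_cases hx : x ∈ F.toFinset
      · have h2 := congrFun h ⟨x, hx⟩
        simpa using congrArg Fin.val h2
      · have h0 : F.count x = 0 := by
          simpa [Multiset.count_eq_zero] using hx
        have k1 : (normalizedFactors b).count x = 0 :=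
          Nat.le_zero.mp (h0 ▸ key ⟨b, hb⟩ x)
        have k2 : (normalizedFactors b').count x = 0 :=
          Nat.le_zero.mp (h0 ▸ key ⟨b', hb'⟩ x)
        rw [k1, k2]
    have : b = b' :=
      associated_iff_eq.mp
        (((prod_normalizedFactors hb0).symm.trans (by rw [hfac])).trans
          (prod_normalizedFactors hb0'))
    exact Subtype.ext this
  calc Nat.card {b : α // b ∣ a}
      ≤ Nat.card (∀ p : F.toFinset, Fin (F.count p.1 + 1)) :=
        Nat.card_le_card_of_injective _ hinj
    _ = ∏ p ∈ F.toFinset, (F.count p + 1) := by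
        rw [Nat.card_eq_fintype_card, Fintype.card_pi]
        simp only [Fintype.card_fin]
        exact Finset.prod_attach F.toFinset (fun p => F.count p + 1)

theorem aux_absNorm_eq {S : Type*} [CommRing S] [Nontrivial S] [IsDedekindDomain S]
    [Module.Free ℤ S] [Module.Finite ℤ S] [DecidableEq (Ideal S)]
    (a : Ideal S) (ha : a ≠ 0) :
    Ideal.absNorm a = ∏ p ∈ (normalizedFactors a).toFinset,
      Ideal.absNorm p ^ (normalizedFactors a).count p := by
  conv_lhs => rw [← associated_iff_eq.mp (prod_normalizedFactors ha)]
  rw [← Finset.prod_multiset_map_count, ← map_multiset_prod]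


theorem aux_count_le (ε : ℝ) (hε : 0 < ε) (e : ℕ) :
    (e + 1 : ℝ) ≤ max 1 (1 / (ε * Real.log 2)) * (2 : ℝ) ^ (ε * e) := by
  set C : ℝ := max 1 (1 / (ε * Real.log 2)) with hC
  have hlog : 0 < Real.log 2 := Real.log_pos (by norm_num)
  have hC1 : (1:ℝ) ≤ C := le_max_left _ _
  have hC2 : 1 / (ε * Real.log 2) ≤ C := le_max_right _ _
  have hCe : 1 ≤ C * (ε * Real.log 2) := by
    rw [div_le_iff₀ (by positivity)] at hC2
    linarith
  have hexp : 1 + Real.log 2 * (ε * e) ≤ (2:ℝ) ^ (ε * e) := by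
    rw [Real.rpow_def_of_pos (by norm_num)]
    have := Real.add_one_le_exp (Real.log 2 * (ε * e))
    linarith
  have he : (0:ℝ) ≤ (e:ℝ) := Nat.cast_nonneg e
  nlinarith [mul_le_mul_of_nonneg_left hexp (le_trans zero_le_one hC1)]



/-- Uniform divisor bound: for every `ε > 0` and `m`, there is a constant `c(m, ε)` such that
for every number field `k` of degree `m` and every nonzero ideal `a` of `𝓞 k`, the number of
ideal divisors of `a` is at most `c · N(a)^ε`. -/
theorem ideal_divisor_bound (ε : ℝ) (hε : 0 < ε) (m : ℕ) :
    ∃ c : ℝ, ∀ (k : Type) [Field k] [NumberField k], Module.finrank ℚ k = m →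
      ∀ a : Ideal (𝓞 k), a ≠ ⊥ →
        (Nat.card {b : Ideal (𝓞 k) // b ∣ a} : ℝ) ≤ c * (Ideal.absNorm a : ℝ) ^ ε := by
  classical
  set C : ℝ := max 1 (1 / (ε * Real.log 2)) with hCdef
  have hC1 : (1:ℝ) ≤ C := le_max_left _ _
  have hC0 : (0:ℝ) ≤ C := le_trans zero_le_one hC1
  set b0 : ℕ := ⌈(2:ℝ) ^ (1/ε)⌉₊ with hb0
  set K : ℕ := (Nat.factorial b0) ^ m with hK
  refine ⟨C ^ K, ?_⟩
  intro k _ _ hm a ha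
  letI : DecidableEq (Ideal (𝓞 k)) := Classical.decEq _
  have ha0 : a ≠ 0 := ha
  set F := normalizedFactors a with hF
  set T := F.toFinset with hT
  have hprime : ∀ p ∈ T, Prime p := fun p hp =>
    prime_of_normalized_factor p (Multiset.mem_toFinset.mp hp)
  have hN2 : ∀ p ∈ T, 2 ≤ Ideal.absNorm p := by
    intro p hp
    have h1 : Ideal.absNorm p ≠ 0 :=
      Ideal.absNorm_ne_zero_iff_mem_nonZeroDivisors.mpr
        (mem_nonZeroDivisors_of_ne_zero (hprime p hp).ne_zero)
    have h2 : Ideal.absNorm p ≠ 1 := fun h1eq =>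
      (hprime p hp).not_unit (Ideal.isUnit_iff.mpr (Ideal.absNorm_eq_one_iff.mp h1eq))
    omega
  have hN2R : ∀ p ∈ T, (2:ℝ) ≤ (Ideal.absNorm p : ℝ) := fun p hp => by
    exact_mod_cast hN2 p hp
  set P : Ideal (𝓞 k) → Prop := fun p => (Ideal.absNorm p : ℝ) < (2:ℝ) ^ (1/ε) with hP
  -- per-prime bound
  have hbound : ∀ p ∈ T, ((F.count p : ℝ) + 1) ≤
      (if P p then C else 1) * ((Ideal.absNorm p : ℝ) ^ (F.count p)) ^ ε := by
    intro p hp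
    set e := F.count p
    have hNnn : (0:ℝ) ≤ (Ideal.absNorm p : ℝ) := Nat.cast_nonneg _
    have hpow : ((Ideal.absNorm p : ℝ) ^ e) ^ ε = (Ideal.absNorm p : ℝ) ^ (ε * e) := by
      rw [← Real.rpow_natCast (Ideal.absNorm p : ℝ) e, ← Real.rpow_mul hNnn, mul_comm]
    by_cases hsmall : P p
    · rw [if_pos hsmall, hpow]
      calc (e + 1 : ℝ) ≤ C * (2:ℝ) ^ (ε * e) := aux_count_le ε hε e
        _ ≤ C * (Ideal.absNorm p : ℝ) ^ (ε * e) := by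
            apply mul_le_mul_of_nonneg_left _ hC0
            exact Real.rpow_le_rpow (by norm_num) (hN2R p hp) (by positivity)
    · rw [if_neg hsmall, one_mul, hpow]
      have hlarge : (2:ℝ) ≤ (Ideal.absNorm p : ℝ) ^ ε := by
        have h2 : ((2:ℝ) ^ (1/ε)) ^ ε = 2 := by
          rw [← Real.rpow_mul (by norm_num), one_div_mul_cancel hε.ne', Real.rpow_one]
        rw [← h2]
        exact Real.rpow_le_rpow (by positivity) (not_lt.mp hsmall) hε.le
      calc (e + 1 : ℝ) ≤ (2:ℝ) ^ e := by exact_mod_cast e.lt_two_pow_self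
        _ ≤ ((Ideal.absNorm p : ℝ) ^ ε) ^ e := pow_le_pow_left₀ (by norm_num) hlarge e
        _ = (Ideal.absNorm p : ℝ) ^ (ε * e) := by
            rw [← Real.rpow_natCast ((Ideal.absNorm p : ℝ) ^ ε) e, ← Real.rpow_mul hNnn]
  -- small primes divide b0!
  have hsmalldvd : ∀ p ∈ T.filter P, p ∣ Ideal.span {((b0.factorial : ℕ) : 𝓞 k)} := by
    intro p hp
    obtain ⟨hpT, hpP⟩ := Finset.mem_filter.mp hp
    have hle : Ideal.absNorm p ≤ b0 := by
      have h := lt_of_lt_of_le hpP (Nat.le_ceil _)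
      exact_mod_cast h.le
    obtain ⟨t, ht⟩ := Nat.dvd_factorial (by have := hN2 p hpT; omega) hle
    rw [Ideal.dvd_iff_le, Ideal.span_le, Set.singleton_subset_iff]
    have heq : ((b0.factorial : ℕ) : 𝓞 k) = ((Ideal.absNorm p : ℕ) : 𝓞 k) * ((t : ℕ) : 𝓞 k) := by
      rw [ht]; push_cast; ring
    rw [SetLike.mem_coe, heq]
    exact Ideal.mul_mem_right _ _ (Ideal.absNorm_mem p)
  have hprod_dvd : (∏ p ∈ T.filter P, p) ∣ Ideal.span {((b0.factorial : ℕ) : 𝓞 k)} :=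
    Finset.prod_primes_dvd _ (fun p hp => hprime p (Finset.mem_filter.mp hp).1) hsmalldvd
  have hnorm_span :
      Ideal.absNorm (Ideal.span {((b0.factorial : ℕ) : 𝓞 k)}) = b0.factorial ^ m := by
    rw [Ideal.absNorm_span_singleton]
    have hcast : ((b0.factorial : ℕ) : 𝓞 k) = algebraMap ℤ (𝓞 k) ((b0.factorial : ℕ) : ℤ) :=
      (map_natCast (algebraMap ℤ (𝓞 k)) b0.factorial).symm
    rw [hcast, Algebra.norm_algebraMap_of_basis (RingOfIntegers.basis k)]
    have hcard : Fintype.card (Module.Free.ChooseBasisIndex ℤ (𝓞 k)) = m := by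
      rw [← Module.finrank_eq_card_chooseBasisIndex, RingOfIntegers.rank, hm]
    rw [hcard, Int.natAbs_pow]
    simp
  set s := (T.filter P).card with hs
  have h2s : 2 ^ s ≤ b0.factorial ^ m := by
    calc 2 ^ s = ∏ _p ∈ T.filter P, 2 := (Finset.prod_const 2).symm
      _ ≤ ∏ p ∈ T.filter P, Ideal.absNorm p :=
          Finset.prod_le_prod' (fun p hp => hN2 p (Finset.mem_filter.mp hp).1)
      _ = Ideal.absNorm (∏ p ∈ T.filter P, p) := (map_prod Ideal.absNorm _ _).symm
      _ ≤ b0.factorial ^ m := by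
          rw [← hnorm_span]
          exact Nat.le_of_dvd (by rw [hnorm_span]; exact Nat.pow_pos b0.factorial_pos)
            (map_dvd Ideal.absNorm hprod_dvd)
  have hsK : s ≤ K := le_of_lt (lt_of_lt_of_le s.lt_two_pow_self (hK ▸ h2s))
  have hstep1 : (Nat.card {b : Ideal (𝓞 k) // b ∣ a} : ℝ) ≤ ∏ p ∈ T, ((F.count p : ℝ) + 1) := by
    have h := aux_card_dvd_le a ha0
    calc (Nat.card {b : Ideal (𝓞 k) // b ∣ a} : ℝ)
        ≤ ((∏ p ∈ T, (F.count p + 1) : ℕ) : ℝ) := Nat.cast_le.mpr h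
      _ = ∏ p ∈ T, ((F.count p : ℝ) + 1) := by push_cast; rfl
  calc (Nat.card {b : Ideal (𝓞 k) // b ∣ a} : ℝ)
      ≤ ∏ p ∈ T, ((F.count p : ℝ) + 1) := hstep1
    _ ≤ ∏ p ∈ T, ((if P p then C else 1) * ((Ideal.absNorm p : ℝ) ^ (F.count p)) ^ ε) :=
        Finset.prod_le_prod (fun p _hp => by positivity) hbound
    _ = (∏ p ∈ T, if P p then C else 1) *
          ∏ p ∈ T, ((Ideal.absNorm p : ℝ) ^ (F.count p)) ^ ε :=
        Finset.prod_mul_distrib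
    _ ≤ C ^ K * (Ideal.absNorm a : ℝ) ^ ε := by
        have h1 : (∏ p ∈ T, if P p then C else 1) = C ^ s := by
          rw [← Finset.prod_filter, Finset.prod_const]
        have h2 : ∏ p ∈ T, ((Ideal.absNorm p : ℝ) ^ (F.count p)) ^ ε
            = (Ideal.absNorm a : ℝ) ^ ε := by
          rw [Real.finset_prod_rpow T _ (fun p _hp => by positivity) ε]
          congr 1
          rw [aux_absNorm_eq a ha0]
          push_cast
          rfl
        rw [h1, h2]
        apply mul_le_mul_of_nonneg_right _ (Real.rpow_nonneg (Nat.cast_nonneg _) ε)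
        exact pow_le_pow_right₀ hC1 hsK
end

section
/- Let k be a number field, S a finite set of prime ideals of 𝒪_k, and ℓ a prime. For a nonzero α ∈ 𝒪_k with prime ideal factorization (α) = ∏_p p^{e_p}, let φ̃(α) := ∏_{p ∉ S} p^{e_p} be the prime-to-S part of (α). Let φ be the induced map from nonzero elements of 𝒪_k modulo ℓ-th powers of k^× to the group I_k/I_k^ℓ of fractional ideals modulo ℓ-th powers. Then every fiber of φ is finite of size at most ℓ^{|S|+r+u+1}, where u is the unit rank of 𝒪_k and r is the ℓ-rank of the class group of k (the dimension of Cl(k)/Cl(k)^ℓ over 𝔽_ℓ). -/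
open NumberField

open scoped Classical in
/-- The prime-to-`S` part of an ideal `I`: the product of `p^{v_p(I)}` over the prime factors
`p ∉ S` of `I`. -/
noncomputable def primeToSIdeal (k : Type) [Field k] [NumberField k]
    (S : Finset (Ideal (𝓞 k))) (I : Ideal (𝓞 k)) : Ideal (𝓞 k) :=
  ∏ p ∈ (UniqueFactorizationMonoid.normalizedFactors I).toFinset.filter (fun p => p ∉ S),
    p ^ (UniqueFactorizationMonoid.normalizedFactors I).count p


open UniqueFactorizationMonoid in
open scoped Classical in
lemma span_factor {k : Type} [Field k] [NumberField k] (S : Finset (Ideal (𝓞 k)))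
    {a : 𝓞 k} (ha : a ≠ 0) :
    Ideal.span {a} = primeToSIdeal k S (Ideal.span {a}) *
      ∏ p ∈ S, p ^ (normalizedFactors (Ideal.span {a})).count p := by
  classical
  set I := Ideal.span {a} with hIdef
  have hI : I ≠ 0 := by
    simpa [hIdef, Submodule.zero_eq_bot, Ideal.span_singleton_eq_bot] using ha
  have h1 : (normalizedFactors I).prod = I :=
    associated_iff_eq.mp (prod_normalizedFactors hI)
  have h2 : (normalizedFactors I).prod
      = ∏ p ∈ (normalizedFactors I).toFinset, p ^ (normalizedFactors I).count p :=
    Finset.prod_multiset_count _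
  have h3 : (∏ p ∈ (normalizedFactors I).toFinset.filter (fun p => p ∉ S),
        p ^ (normalizedFactors I).count p) *
      (∏ p ∈ (normalizedFactors I).toFinset.filter (fun p => p ∈ S),
        p ^ (normalizedFactors I).count p)
      = ∏ p ∈ (normalizedFactors I).toFinset, p ^ (normalizedFactors I).count p := by
    rw [mul_comm]
    simpa using Finset.prod_filter_mul_prod_filter_not (normalizedFactors I).toFinset
      (fun p => p ∈ S) _
  have h4 : (∏ p ∈ (normalizedFactors I).toFinset.filter (fun p => p ∈ S),
        p ^ (normalizedFactors I).count p)
      = ∏ p ∈ S, p ^ (normalizedFactors I).count p := by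
    refine Finset.prod_subset (fun p hp => (Finset.mem_filter.mp hp).2) ?_
    intro p hpS hp
    have : p ∉ (normalizedFactors I).toFinset := fun h => hp (Finset.mem_filter.mpr ⟨h, hpS⟩)
    rw [Multiset.count_eq_zero.mpr (fun h => this (Multiset.mem_toFinset.mpr h)), pow_zero]
  have : primeToSIdeal k S I = ∏ p ∈ (normalizedFactors I).toFinset.filter (fun p => p ∉ S),
      p ^ (normalizedFactors I).count p := by
    rfl
  rw [this, ← h4, h3, ← h2, h1]

lemma primeToS_ne_zero {k : Type} [Field k] [NumberField k] (S : Finset (Ideal (𝓞 k)))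
    (I : Ideal (𝓞 k)) : primeToSIdeal k S I ≠ 0 := by
  classical
  rw [primeToSIdeal]
  rw [Finset.prod_ne_zero_iff]
  intro p hp
  have hp' : p ∈ UniqueFactorizationMonoid.normalizedFactors I :=
    Multiset.mem_toFinset.mp (Finset.mem_filter.mp hp).1
  exact pow_ne_zero _ (UniqueFactorizationMonoid.irreducible_of_normalized_factor p hp').ne_zero

open scoped nonZeroDivisors

lemma coeIdeal_finsetProd {k : Type} [Field k] [NumberField k] {ι : Type*} (s : Finset ι)
    (f : ι → Ideal (𝓞 k)) :
    ((∏ i ∈ s, f i : Ideal (𝓞 k)) : FractionalIdeal (𝓞 k)⁰ k)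
      = ∏ i ∈ s, ((f i : FractionalIdeal (𝓞 k)⁰ k)) :=
  map_prod (FractionalIdeal.coeIdealHom (𝓞 k)⁰ k) f s

open UniqueFactorizationMonoid FractionalIdeal in
open scoped Classical in
lemma exists_pow_eq {k : Type} [Field k] [NumberField k] {ℓ : ℕ} (hℓ : ℓ.Prime)
    {S : Finset (Ideal (𝓞 k))} (hS : ∀ p ∈ S, p.IsPrime ∧ p ≠ ⊥)
    {a b : 𝓞 k} (ha : a ≠ 0) (hb : b ≠ 0)
    (hJ : ∃ J J' : Ideal (𝓞 k), J ≠ ⊥ ∧ J' ≠ ⊥ ∧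
      primeToSIdeal k S (Ideal.span {a}) * J ^ ℓ =
        primeToSIdeal k S (Ideal.span {b}) * J' ^ ℓ)
    (he : ∀ p ∈ S, (((normalizedFactors (Ideal.span {a})).count p : ZMod ℓ))
      = ((normalizedFactors (Ideal.span {b})).count p : ZMod ℓ)) :
    ∃ C : FractionalIdeal (𝓞 k)⁰ k, C ≠ 0 ∧
      spanSingleton (𝓞 k)⁰ (algebraMap (𝓞 k) k a)
        = spanSingleton (𝓞 k)⁰ (algebraMap (𝓞 k) k b) * C ^ ℓ := by
  obtain ⟨J, J', hJ0, hJ'0, hEq⟩ := hJ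
  set eA : Ideal (𝓞 k) → ℕ := fun p => (normalizedFactors (Ideal.span {a})).count p with heA
  set eB : Ideal (𝓞 k) → ℕ := fun p => (normalizedFactors (Ideal.span {b})).count p with heB
  set PA := primeToSIdeal k S (Ideal.span {a}) with hPA
  set PB := primeToSIdeal k S (Ideal.span {b}) with hPB
  -- nonzero facts
  have hp0 : ∀ p ∈ S, (p : FractionalIdeal (𝓞 k)⁰ k) ≠ 0 := fun p hp => by
    simpa [FractionalIdeal.coeIdeal_eq_zero] using (hS p hp).2
  have hPA0 : (PA : FractionalIdeal (𝓞 k)⁰ k) ≠ 0 := by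
    simpa [FractionalIdeal.coeIdeal_eq_zero, Submodule.zero_eq_bot] using primeToS_ne_zero S _
  have hPB0 : (PB : FractionalIdeal (𝓞 k)⁰ k) ≠ 0 := by
    simpa [FractionalIdeal.coeIdeal_eq_zero, Submodule.zero_eq_bot] using primeToS_ne_zero S _
  have hJF0 : (J : FractionalIdeal (𝓞 k)⁰ k) ≠ 0 := by
    simpa [FractionalIdeal.coeIdeal_eq_zero] using hJ0
  have hJ'F0 : (J' : FractionalIdeal (𝓞 k)⁰ k) ≠ 0 := by
    simpa [FractionalIdeal.coeIdeal_eq_zero] using hJ'0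
  -- the casted factorization identities
  have EA : spanSingleton (𝓞 k)⁰ (algebraMap (𝓞 k) k a)
      = (PA : FractionalIdeal (𝓞 k)⁰ k) *
        ∏ p ∈ S, (p : FractionalIdeal (𝓞 k)⁰ k) ^ ((eA p : ℤ)) := by
    have := congrArg (fun I : Ideal (𝓞 k) => (I : FractionalIdeal (𝓞 k)⁰ k)) (span_factor S ha)
    simp only [FractionalIdeal.coeIdeal_mul, coeIdeal_finsetProd, FractionalIdeal.coeIdeal_pow,
      FractionalIdeal.coeIdeal_span_singleton, zpow_natCast] at this ⊢
    exact this
  have EB : spanSingleton (𝓞 k)⁰ (algebraMap (𝓞 k) k b)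
      = (PB : FractionalIdeal (𝓞 k)⁰ k) *
        ∏ p ∈ S, (p : FractionalIdeal (𝓞 k)⁰ k) ^ ((eB p : ℤ)) := by
    have := congrArg (fun I : Ideal (𝓞 k) => (I : FractionalIdeal (𝓞 k)⁰ k)) (span_factor S hb)
    simp only [FractionalIdeal.coeIdeal_mul, coeIdeal_finsetProd, FractionalIdeal.coeIdeal_pow,
      FractionalIdeal.coeIdeal_span_singleton, zpow_natCast] at this ⊢
    exact this
  have hEqF : (PA : FractionalIdeal (𝓞 k)⁰ k) * (J : FractionalIdeal (𝓞 k)⁰ k) ^ ℓ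
      = (PB : FractionalIdeal (𝓞 k)⁰ k) * (J' : FractionalIdeal (𝓞 k)⁰ k) ^ ℓ := by
    have := congrArg (fun I : Ideal (𝓞 k) => (I : FractionalIdeal (𝓞 k)⁰ k)) hEq
    simpa only [FractionalIdeal.coeIdeal_mul, FractionalIdeal.coeIdeal_pow] using this
  -- exponent bookkeeping
  have hdvd : ∀ p ∈ S, (ℓ : ℤ) ∣ ((eA p : ℤ) - (eB p : ℤ)) := by
    intro p hp
    have h := he p hp
    have : (((eA p : ℤ) - (eB p : ℤ) : ℤ) : ZMod ℓ) = 0 := by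
      push_cast
      rw [h]; ring
    exact (ZMod.intCast_zmod_eq_zero_iff_dvd _ _).mp this
  set q : Ideal (𝓞 k) → ℤ := fun p => ((eA p : ℤ) - (eB p : ℤ)) / ℓ with hqdef
  have hq : ∀ p ∈ S, (eA p : ℤ) = (eB p : ℤ) + ℓ * q p := by
    intro p hp
    have h2 := Int.mul_ediv_cancel' (hdvd p hp)
    simp only [hqdef]
    omega
  set F : FractionalIdeal (𝓞 k)⁰ k := ∏ p ∈ S, (p : FractionalIdeal (𝓞 k)⁰ k) ^ (q p) with hF
  have hF0 : F ≠ 0 := by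
    rw [hF, Finset.prod_ne_zero_iff]
    exact fun p hp => zpow_ne_zero _ (hp0 p hp)
  have hprod : (∏ p ∈ S, (p : FractionalIdeal (𝓞 k)⁰ k) ^ ((eA p : ℤ)))
      = (∏ p ∈ S, (p : FractionalIdeal (𝓞 k)⁰ k) ^ ((eB p : ℤ))) * F ^ ℓ := by
    rw [hF, ← Finset.prod_pow, ← Finset.prod_mul_distrib]
    refine Finset.prod_congr rfl fun p hp => ?_
    rw [← zpow_natCast ((p : FractionalIdeal (𝓞 k)⁰ k) ^ (q p)) ℓ, ← zpow_mul,
      ← zpow_add₀ (hp0 p hp)]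
    congr 1
    rw [hq p hp]; ring
  refine ⟨(J' : FractionalIdeal (𝓞 k)⁰ k) * F / (J : FractionalIdeal (𝓞 k)⁰ k), ?_, ?_⟩
  · exact div_ne_zero (mul_ne_zero hJ'F0 hF0) hJF0
  · have hC : ((J' : FractionalIdeal (𝓞 k)⁰ k) * F / (J : FractionalIdeal (𝓞 k)⁰ k)) ^ ℓ *
        (J : FractionalIdeal (𝓞 k)⁰ k) ^ ℓ
        = (J' : FractionalIdeal (𝓞 k)⁰ k) ^ ℓ * F ^ ℓ := by
      rw [div_pow, div_mul_cancel₀ _ (pow_ne_zero _ hJF0), mul_pow]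
    refine mul_right_cancel₀ (pow_ne_zero ℓ hJF0) ?_
    calc spanSingleton (𝓞 k)⁰ (algebraMap (𝓞 k) k a) * (J : FractionalIdeal (𝓞 k)⁰ k) ^ ℓ
        = ((PA : FractionalIdeal (𝓞 k)⁰ k) * (J : FractionalIdeal (𝓞 k)⁰ k) ^ ℓ) *
          ∏ p ∈ S, (p : FractionalIdeal (𝓞 k)⁰ k) ^ ((eA p : ℤ)) := by rw [EA]; ring
      _ = ((PB : FractionalIdeal (𝓞 k)⁰ k) * (J' : FractionalIdeal (𝓞 k)⁰ k) ^ ℓ) *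
          ((∏ p ∈ S, (p : FractionalIdeal (𝓞 k)⁰ k) ^ ((eB p : ℤ))) * F ^ ℓ) := by
            rw [hEqF, hprod]
      _ = (spanSingleton (𝓞 k)⁰ (algebraMap (𝓞 k) k b)) *
          ((J' : FractionalIdeal (𝓞 k)⁰ k) ^ ℓ * F ^ ℓ) := by rw [EB]; ring
      _ = spanSingleton (𝓞 k)⁰ (algebraMap (𝓞 k) k b) *
          ((J' : FractionalIdeal (𝓞 k)⁰ k) * F / (J : FractionalIdeal (𝓞 k)⁰ k)) ^ ℓ *
          (J : FractionalIdeal (𝓞 k)⁰ k) ^ ℓ := by rw [mul_assoc, hC]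

open NumberField.Units in
lemma units_quot_bound (k : Type) [Field k] [NumberField k] {ℓ : ℕ} (hℓ : ℓ.Prime) :
    Finite ((𝓞 k)ˣ ⧸ (powMonoidHom ℓ : (𝓞 k)ˣ →* (𝓞 k)ˣ).range) ∧
      Nat.card ((𝓞 k)ˣ ⧸ (powMonoidHom ℓ : (𝓞 k)ˣ →* (𝓞 k)ˣ).range)
        ≤ ℓ ^ (NumberField.Units.rank k + 1) := by
  set N := (powMonoidHom ℓ : (𝓞 k)ˣ →* (𝓞 k)ˣ).range with hN
  have hpow : ∀ x : (𝓞 k)ˣ ⧸ N, x ^ ℓ = 1 := by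
    intro x
    induction x using QuotientGroup.induction_on with
    | H g =>
      rw [← QuotientGroup.mk_pow, QuotientGroup.eq_one_iff]
      exact ⟨g, rfl⟩
  set T' := Subgroup.map (QuotientGroup.mk' N) (torsion k) with hT'
  haveI : Finite T' :=
    Finite.of_surjective _ ((QuotientGroup.mk' N).subgroupMap_surjective (torsion k))
  haveI hc : IsCyclic T' :=
    isCyclic_of_surjective _ ((QuotientGroup.mk' N).subgroupMap_surjective (torsion k))
  have hT'card : Nat.card T' ≤ ℓ := by
    have hdvd : Monoid.exponent T' ∣ ℓ :=
      Monoid.exponent_dvd_of_forall_pow_eq_one fun g => by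
        ext
        push_cast
        exact hpow _
    rw [← IsCyclic.exponent_eq_card]
    exact Nat.le_of_dvd hℓ.pos hdvd
  set F : T' × (Fin (NumberField.Units.rank k) → ZMod ℓ) → (𝓞 k)ˣ ⧸ N :=
    fun tv => (tv.1 : (𝓞 k)ˣ ⧸ N) *
      QuotientGroup.mk (∏ i, fundSystem k i ^ ((tv.2 i).val)) with hFdef
  haveI : NeZero ℓ := ⟨hℓ.ne_zero⟩
  have hFsurj : Function.Surjective F := by
    intro x
    induction x using QuotientGroup.induction_on with
    | H g =>
      obtain ⟨⟨t, n⟩, hgn, -⟩ := exist_unique_eq_mul_prod k g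
      refine ⟨⟨⟨QuotientGroup.mk (t : (𝓞 k)ˣ), ⟨t, t.2, rfl⟩⟩, fun i => ((n i : ZMod ℓ))⟩, ?_⟩
      simp only [hFdef]
      have key : (QuotientGroup.mk (∏ i, fundSystem k i ^ (((n i : ZMod ℓ)).val)) :
          (𝓞 k)ˣ ⧸ N) = QuotientGroup.mk (∏ i, fundSystem k i ^ (n i)) := by
        rw [QuotientGroup.eq]
        have : (∏ i, fundSystem k i ^ (((n i : ZMod ℓ)).val))⁻¹ *
            (∏ i, fundSystem k i ^ (n i))
            = ∏ i, fundSystem k i ^ (n i - (((n i : ZMod ℓ)).val : ℤ)) := by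
          rw [← Finset.prod_inv_distrib, ← Finset.prod_mul_distrib]
          refine Finset.prod_congr rfl fun i _ => ?_
          rw [sub_eq_add_neg, zpow_add, zpow_neg, mul_comm, zpow_natCast]
        rw [this]
        have hdvd : ∀ i, (ℓ : ℤ) ∣ (n i - (((n i : ZMod ℓ)).val : ℤ)) := by
          intro i
          have : ((n i - (((n i : ZMod ℓ)).val : ℤ) : ℤ) : ZMod ℓ) = 0 := by
            push_cast
            simp [ZMod.cast_id]
          exact (ZMod.intCast_zmod_eq_zero_iff_dvd _ _).mp this
        choose m hm using hdvd
        refine ⟨∏ i, fundSystem k i ^ (m i), ?_⟩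
        rw [powMonoidHom_apply, ← Finset.prod_pow]
        refine Finset.prod_congr rfl fun i _ => ?_
        rw [← zpow_natCast (fundSystem k i ^ (m i)) ℓ, ← zpow_mul, hm i, mul_comm]
      rw [key, hgn, QuotientGroup.mk_mul]
  constructor
  · exact Finite.of_surjective F hFsurj
  · calc Nat.card ((𝓞 k)ˣ ⧸ N) ≤ Nat.card (T' × (Fin (NumberField.Units.rank k) → ZMod ℓ)) :=
        Nat.card_le_card_of_surjective F hFsurj
    _ = Nat.card T' * ℓ ^ (NumberField.Units.rank k) := by
        rw [Nat.card_prod]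
        congr 1
        rw [Nat.card_eq_fintype_card, Fintype.card_fun, ZMod.card, Fintype.card_fin]
    _ ≤ ℓ * ℓ ^ (NumberField.Units.rank k) := Nat.mul_le_mul_right _ hT'card
    _ = ℓ ^ (NumberField.Units.rank k + 1) := by rw [pow_succ, mul_comm]

lemma card_ker_eq_card_coker {G : Type*} [CommGroup G] [Finite G] (ℓ : ℕ) :
    Nat.card {x : G // x ^ ℓ = 1}
      = Nat.card (G ⧸ (powMonoidHom ℓ : G →* G).range) := by
  set f := (powMonoidHom ℓ : G →* G) with hf
  have h1 : Nat.card G = Nat.card (G ⧸ f.ker) * Nat.card f.ker :=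
    Subgroup.card_eq_card_quotient_mul_card_subgroup f.ker
  have h2 : Nat.card (G ⧸ f.ker) = Nat.card f.range :=
    Nat.card_congr (QuotientGroup.quotientKerEquivRange f).toEquiv
  have h3 : Nat.card G = Nat.card (G ⧸ f.range) * Nat.card f.range :=
    Subgroup.card_eq_card_quotient_mul_card_subgroup f.range
  have h4 : Nat.card {x : G // x ^ ℓ = 1} = Nat.card f.ker := by
    refine Nat.card_congr (Equiv.subtypeEquivRight fun x => ?_)
    simp [hf, MonoidHom.mem_ker, powMonoidHom_apply]
  have hr : 0 < Nat.card f.range := Nat.card_pos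
  rw [h4]
  refine Nat.eq_of_mul_eq_mul_right hr ?_
  rw [← h3, h1, h2]
  ring

lemma fiber_count {α β : Type*} [DecidableEq β] {B : Set α} {f : α → β} {T : Finset β}
    (hT : ∀ b ∈ B, f b ∈ T) {n : ℕ}
    (hfib : ∀ t ∈ T, (B ∩ f ⁻¹' {t}).Finite ∧ (B ∩ f ⁻¹' {t}).ncard ≤ n) :
    B.Finite ∧ B.ncard ≤ T.card * n := by
  have hB : B = ⋃ t ∈ T, (B ∩ f ⁻¹' {t}) := by
    ext x
    simp only [Set.mem_iUnion, Set.mem_inter_iff, Set.mem_preimage, Set.mem_singleton_iff]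
    exact ⟨fun hx => ⟨f x, hT x hx, hx, rfl⟩, by rintro ⟨t, ht, hx, rfl⟩; exact hx⟩
  have hfin : B.Finite := by
    rw [hB]
    exact Set.Finite.biUnion T.finite_toSet (fun t ht => (hfib t ht).1)
  refine ⟨hfin, ?_⟩
  classical
  set Bf := hfin.toFinset with hBf
  have hmem : ∀ x, x ∈ Bf ↔ x ∈ B := fun x => hfin.mem_toFinset
  have himg : Bf.image f ⊆ T := by
    intro t ht
    obtain ⟨x, hx, rfl⟩ := Finset.mem_image.mp ht
    exact hT x ((hmem x).mp hx)
  have hcard : Bf.card ≤ n * (Bf.image f).card := by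
    refine Finset.card_le_mul_card_image _ _ fun t ht => ?_
    have hsub : ((Bf.filter fun x => f x = t : Finset α) : Set α) ⊆ B ∩ f ⁻¹' {t} := by
      intro x hx
      simp only [Finset.coe_filter, Set.mem_setOf_eq] at hx
      exact ⟨(hmem x).mp hx.1, hx.2⟩
    have := Set.ncard_le_ncard hsub (hfib t (himg ht)).1
    rw [Set.ncard_coe_finset] at this
    exact this.trans (hfib t (himg ht)).2
  have hBcard : B.ncard = Bf.card := Set.ncard_eq_toFinset_card _ hfin
  rw [hBcard]
  calc Bf.card ≤ n * (Bf.image f).card := hcard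
    _ ≤ n * T.card := Nat.mul_le_mul_left n (Finset.card_le_card himg)
    _ = T.card * n := Nat.mul_comm _ _

open FractionalIdeal in
lemma class_eq_exists {k : Type} [Field k] [NumberField k]
    {u v : (FractionalIdeal (𝓞 k)⁰ k)ˣ} (h : ClassGroup.mk k u = ClassGroup.mk k v) :
    ∃ x : k, x ≠ 0 ∧ (u : FractionalIdeal (𝓞 k)⁰ k)
      = spanSingleton (𝓞 k)⁰ x * (v : FractionalIdeal (𝓞 k)⁰ k) := by
  have h1 : ClassGroup.mk k (u * v⁻¹) = (1 : ClassGroup (𝓞 k)) := by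
    rw [_root_.map_mul, _root_.map_inv, h, mul_inv_cancel]
  have h2 := ClassGroup.mk_eq_one_iff.mp h1
  obtain ⟨x, hx⟩ := (FractionalIdeal.isPrincipal_iff _).mp h2
  have hx0 : x ≠ 0 := by
    intro h0
    apply Units.ne_zero (u * v⁻¹)
    rw [hx, h0, spanSingleton_zero]
  refine ⟨x, hx0, ?_⟩
  have hv : (v : FractionalIdeal (𝓞 k)⁰ k) ≠ 0 := Units.ne_zero v
  have : ((u * v⁻¹ : (FractionalIdeal (𝓞 k)⁰ k)ˣ) : FractionalIdeal (𝓞 k)⁰ k)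
      = (u : FractionalIdeal (𝓞 k)⁰ k) * (v : FractionalIdeal (𝓞 k)⁰ k)⁻¹ := by
    rw [Units.val_mul, Units.val_inv_eq_inv_val]
  rw [this] at hx
  field_simp at hx
  rw [hx, mul_comm]

open UniqueFactorizationMonoid FractionalIdeal in
/-- The fibers of the map `φ : 𝒪_k \ {0} mod (k^×)^ℓ → I_k/I_k^ℓ`, `α ↦` (prime-to-`S` part of
`(α)`), have size at most `ℓ^{|S|+r+u+1}`, where `u` is the unit rank and `r` the `ℓ`-rank of
the class group (so `ℓ^r = |Cl(k)/Cl(k)^ℓ|`).  Formulated concretely: any set `A` of nonzero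
elements of `𝒪_k`, pairwise inequivalent modulo `ℓ`-th powers of `k^×`, whose images under `φ̃`
lie in one class modulo `ℓ`-th powers of ideals, is finite of cardinality at most
`ℓ^{|S|+u+1} · |Cl(k)/Cl(k)^ℓ|`. -/
theorem fiber_bound (k : Type) [Field k] [NumberField k] (ℓ : ℕ) (hℓ : ℓ.Prime)
    (S : Finset (Ideal (𝓞 k))) (hS : ∀ p ∈ S, p.IsPrime ∧ p ≠ ⊥)
    (A : Set (𝓞 k)) (h0 : ∀ a ∈ A, a ≠ 0)
    (hdistinct : ∀ a ∈ A, ∀ b ∈ A, a ≠ b →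
      ¬ ∃ γ : k, (algebraMap (𝓞 k) k a) = γ ^ ℓ * (algebraMap (𝓞 k) k b))
    (hfiber : ∀ a ∈ A, ∀ b ∈ A, ∃ J J' : Ideal (𝓞 k), J ≠ ⊥ ∧ J' ≠ ⊥ ∧
      primeToSIdeal k S (Ideal.span {a}) * J ^ ℓ =
        primeToSIdeal k S (Ideal.span {b}) * J' ^ ℓ) :
    A.Finite ∧ A.ncard ≤ ℓ ^ (S.card + NumberField.Units.rank k + 1) *
      Nat.card (ClassGroup (𝓞 k) ⧸
        (powMonoidHom ℓ : ClassGroup (𝓞 k) →* ClassGroup (𝓞 k)).range) := by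

  classical
  haveI : NeZero ℓ := ⟨hℓ.ne_zero⟩
  haveI : Module.IsTorsionFree (𝓞 k) k :=
    NoZeroSMulDivisors.iff_algebraMap_injective.mpr (IsFractionRing.injective _ _)
  obtain ⟨hufin, hucard⟩ := units_quot_bound k hℓ
  haveI := hufin
  haveI : Fintype ((𝓞 k)ˣ ⧸ (powMonoidHom ℓ : (𝓞 k)ˣ →* (𝓞 k)ˣ).range) := Fintype.ofFinite _
  set Nu := Nat.card ((𝓞 k)ˣ ⧸ (powMonoidHom ℓ : (𝓞 k)ˣ →* (𝓞 k)ˣ).range) with hNu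
  set Ncl := Nat.card (ClassGroup (𝓞 k) ⧸
      (powMonoidHom ℓ : ClassGroup (𝓞 k) →* ClassGroup (𝓞 k)).range) with hNcl
  set c1 : 𝓞 k → ({p // p ∈ S} → ZMod ℓ) := fun a p =>
    ((normalizedFactors (Ideal.span {a})).count p.1 : ZMod ℓ) with hc1
  have hspan0 : ∀ a : 𝓞 k, a ≠ 0 →
      spanSingleton (𝓞 k)⁰ (algebraMap (𝓞 k) k a) ≠ 0 := by
    intro a ha
    rw [spanSingleton_ne_zero_iff]
    exact fun h => ha ((map_eq_zero_iff _ (IsFractionRing.injective _ _)).mp h)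
  have hmkone : ∀ (a : 𝓞 k) (h : spanSingleton (𝓞 k)⁰ (algebraMap (𝓞 k) k a) ≠ 0),
      ClassGroup.mk k (Units.mk0 _ h) = 1 := by
    intro a h
    exact ClassGroup.mk_eq_one_iff.mpr ((FractionalIdeal.isPrincipal_iff _).mpr
      ⟨algebraMap (𝓞 k) k a, rfl⟩)
  -- Level 1 fibers
  have hfib₁ : ∀ v ∈ (Finset.univ : Finset ({p // p ∈ S} → ZMod ℓ)),
      (A ∩ c1 ⁻¹' {v}).Finite ∧ (A ∩ c1 ⁻¹' {v}).ncard ≤ Ncl * Nu := by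
    intro v _
    set B₁ := A ∩ c1 ⁻¹' {v} with hB₁
    rcases Set.eq_empty_or_nonempty B₁ with hE | ⟨a₀, ha₀⟩
    · rw [hE]; simp
    have hB₁A : B₁ ⊆ A := Set.inter_subset_left
    have hc1B : ∀ a ∈ B₁, c1 a = v := fun a ha => ha.2
    have ha₀A : a₀ ∈ A := ha₀.1
    have ha₀0 : a₀ ≠ 0 := h0 _ ha₀A
    have hCex : ∀ a : 𝓞 k, ∃ C : FractionalIdeal (𝓞 k)⁰ k, a ∈ B₁ →
        (C ≠ 0 ∧ spanSingleton (𝓞 k)⁰ (algebraMap (𝓞 k) k a)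
          = spanSingleton (𝓞 k)⁰ (algebraMap (𝓞 k) k a₀) * C ^ ℓ) := by
      intro a
      by_cases h : a ∈ B₁
      · have he : ∀ p ∈ S, (((normalizedFactors (Ideal.span {a})).count p : ZMod ℓ))
            = ((normalizedFactors (Ideal.span {a₀})).count p : ZMod ℓ) := by
          intro p hp
          have h1 := congrFun (hc1B a h) ⟨p, hp⟩
          have h2 := congrFun (hc1B a₀ ha₀) ⟨p, hp⟩
          exact h1.trans h2.symm
        obtain ⟨C, hC⟩ := exists_pow_eq hℓ hS (h0 a (hB₁A h)) ha₀0
          (hfiber a (hB₁A h) a₀ ha₀A) he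
        exact ⟨C, fun _ => hC⟩
      · exact ⟨1, fun h' => absurd h' h⟩
    choose C hC using hCex
    set f₂ : 𝓞 k → ClassGroup (𝓞 k) := fun a =>
      if h : a ∈ B₁ then ClassGroup.mk k (Units.mk0 (C a) ((hC a h).1)) else 1 with hf₂
    set T₂ : Finset (ClassGroup (𝓞 k)) := Finset.univ.filter (fun c => c ^ ℓ = 1) with hT₂
    have hunit : ∀ a (h : a ∈ B₁),
        Units.mk0 _ (hspan0 a (h0 a (hB₁A h)))
          = Units.mk0 _ (hspan0 a₀ ha₀0) * (Units.mk0 (C a) ((hC a h).1)) ^ ℓ := by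
      intro a h
      rw [Units.ext_iff]
      simp only [Units.val_mul, Units.val_pow_eq_pow_val, Units.val_mk0]
      exact (hC a h).2
    have hmem₂ : ∀ a ∈ B₁, f₂ a ∈ T₂ := by
      intro a h
      rw [hT₂, Finset.mem_filter]
      refine ⟨Finset.mem_univ _, ?_⟩
      rw [hf₂]
      simp only [dif_pos h]
      have := congrArg (ClassGroup.mk k) (hunit a h)
      rw [_root_.map_mul, _root_.map_pow, hmkone a _, hmkone a₀ _] at this
      simpa using this.symm
    have hfib₂ : ∀ t ∈ T₂, (B₁ ∩ f₂ ⁻¹' {t}).Finite ∧ (B₁ ∩ f₂ ⁻¹' {t}).ncard ≤ Nu := by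
      intro t _
      set B₂ := B₁ ∩ f₂ ⁻¹' {t} with hB₂def
      rcases Set.eq_empty_or_nonempty B₂ with hE | ⟨a₁, ha₁⟩
      · rw [hE]; simp
      have hB₂B₁ : B₂ ⊆ B₁ := Set.inter_subset_left
      have ha₁B₁ : a₁ ∈ B₁ := ha₁.1
      have hεex : ∀ a : 𝓞 k, ∃ (ε : (𝓞 k)ˣ) (x : k), a ∈ B₂ →
          (x ≠ 0 ∧ algebraMap (𝓞 k) k a
            = algebraMap (𝓞 k) k ((ε : (𝓞 k)ˣ) : 𝓞 k) * (x ^ ℓ * algebraMap (𝓞 k) k a₁)) := by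
        intro a
        by_cases h : a ∈ B₂
        · have haB₁ : a ∈ B₁ := hB₂B₁ h
          have hmkeq : ClassGroup.mk k (Units.mk0 (C a) ((hC a haB₁).1))
              = ClassGroup.mk k (Units.mk0 (C a₁) ((hC a₁ ha₁B₁).1)) := by
            have h1 : f₂ a = t := h.2
            have h2 : f₂ a₁ = t := ha₁.2
            have := h1.trans h2.symm
            rw [hf₂] at this
            simpa only [dif_pos haB₁, dif_pos ha₁B₁] using this
          obtain ⟨x, hx0, hxeq⟩ := class_eq_exists hmkeq
          simp only [Units.val_mk0] at hxeq
          -- spanSingleton a = spanSingleton (x^ℓ * a₁)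
          have hsp : spanSingleton (𝓞 k)⁰ (algebraMap (𝓞 k) k a)
              = spanSingleton (𝓞 k)⁰ (x ^ ℓ * algebraMap (𝓞 k) k a₁) := by
            calc spanSingleton (𝓞 k)⁰ (algebraMap (𝓞 k) k a)
                = spanSingleton (𝓞 k)⁰ (algebraMap (𝓞 k) k a₀) *
                  (spanSingleton (𝓞 k)⁰ x * C a₁) ^ ℓ := by rw [(hC a haB₁).2, hxeq]
              _ = (spanSingleton (𝓞 k)⁰ (algebraMap (𝓞 k) k a₀) * C a₁ ^ ℓ) *
                  spanSingleton (𝓞 k)⁰ x ^ ℓ := by ring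
              _ = spanSingleton (𝓞 k)⁰ (algebraMap (𝓞 k) k a₁) *
                  spanSingleton (𝓞 k)⁰ (x ^ ℓ) := by
                    rw [← (hC a₁ ha₁B₁).2, spanSingleton_pow]
              _ = spanSingleton (𝓞 k)⁰ (x ^ ℓ * algebraMap (𝓞 k) k a₁) := by
                    rw [spanSingleton_mul_spanSingleton, mul_comm]
          obtain ⟨ε, hε⟩ := (spanSingleton_eq_spanSingleton).mp hsp.symm
          refine ⟨ε, x, fun _ => ⟨hx0, ?_⟩⟩
          rw [← hε, Units.smul_def, Algebra.smul_def]
        · exact ⟨1, 1, fun h' => absurd h' h⟩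
      choose ε xc hεx using hεex
      set f₃ : 𝓞 k → ((𝓞 k)ˣ ⧸ (powMonoidHom ℓ : (𝓞 k)ˣ →* (𝓞 k)ˣ).range) := fun a =>
        QuotientGroup.mk (ε a) with hf₃
      have hfib₃ : ∀ w ∈ (Finset.univ :
          Finset ((𝓞 k)ˣ ⧸ (powMonoidHom ℓ : (𝓞 k)ˣ →* (𝓞 k)ˣ).range)),
          (B₂ ∩ f₃ ⁻¹' {w}).Finite ∧ (B₂ ∩ f₃ ⁻¹' {w}).ncard ≤ 1 := by
        intro w _
        have hsub : (B₂ ∩ f₃ ⁻¹' {w}).Subsingleton := by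
          intro a ha b hb
          by_contra hne
          have haB₂ : a ∈ B₂ := ha.1
          have hbB₂ : b ∈ B₂ := hb.1
          have haA : a ∈ A := (hB₂B₁ haB₂).1
          have hbA : b ∈ A := (hB₂B₁ hbB₂).1
          obtain ⟨hxa0, hEqa⟩ := hεx a haB₂
          obtain ⟨hxb0, hEqb⟩ := hεx b hbB₂
          have hquot : (QuotientGroup.mk (ε a) :
              (𝓞 k)ˣ ⧸ (powMonoidHom ℓ : (𝓞 k)ˣ →* (𝓞 k)ˣ).range) = QuotientGroup.mk (ε b) :=
            (ha.2 : f₃ a = w).trans (hb.2 : f₃ b = w).symm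
          obtain ⟨η, hη⟩ := QuotientGroup.eq.mp hquot
          rw [powMonoidHom_apply] at hη
          -- ε b * (η⁻¹)^ℓ = ε a
          have huu : (ε b) * (η⁻¹) ^ ℓ = ε a := by
            rw [inv_pow, hη]
            group
          have hu : ((ε b : (𝓞 k)ˣ) : 𝓞 k) * (((η⁻¹ : (𝓞 k)ˣ) : 𝓞 k)) ^ ℓ
              = ((ε a : (𝓞 k)ˣ) : 𝓞 k) := by
            have := congrArg (Units.val) huu
            push_cast at this
            exact this
          refine hdistinct a haA b hbA hne
            ⟨algebraMap (𝓞 k) k ((η⁻¹ : (𝓞 k)ˣ) : 𝓞 k) * xc a / xc b, ?_⟩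
          rw [hEqa, hEqb, ← hu]
          have ha₁0 : algebraMap (𝓞 k) k a₁ ≠ 0 := fun hz =>
            h0 a₁ (hB₁A ha₁B₁) ((map_eq_zero_iff _ (IsFractionRing.injective _ _)).mp hz)
          simp only [map_mul, map_pow]
          have hinv : xc b ^ ℓ * (xc b ^ ℓ)⁻¹ = 1 := mul_inv_cancel₀ (pow_ne_zero _ hxb0)
          rw [div_pow, div_eq_mul_inv]
          linear_combination (-(algebraMap (𝓞 k) k ((ε b : (𝓞 k)ˣ) : 𝓞 k) *
            (algebraMap (𝓞 k) k ((η⁻¹ : (𝓞 k)ˣ) : 𝓞 k) * xc a) ^ ℓ * algebraMap (𝓞 k) k a₁)) * hinv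
        exact ⟨hsub.finite, (Set.ncard_le_one hsub.finite).mpr fun a ha b hb => hsub ha hb⟩
      have h3 := fiber_count (B := B₂) (f := f₃)
        (T := (Finset.univ : Finset ((𝓞 k)ˣ ⧸ (powMonoidHom ℓ : (𝓞 k)ˣ →* (𝓞 k)ˣ).range)))
        (n := 1) (fun b _ => Finset.mem_univ _) hfib₃
      refine ⟨h3.1, h3.2.trans ?_⟩
      rw [Finset.card_univ, mul_one, hNu, Nat.card_eq_fintype_card]
    have h2 := fiber_count (B := B₁) (f := f₂) (T := T₂) (n := Nu) hmem₂ hfib₂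
    refine ⟨h2.1, h2.2.trans ?_⟩
    have hT₂card : T₂.card = Ncl := by
      rw [hT₂, hNcl, ← card_ker_eq_card_coker]
      rw [Nat.card_eq_fintype_card, Fintype.card_subtype]
    rw [hT₂card]
  have h1 := fiber_count (B := A) (f := c1)
    (T := (Finset.univ : Finset ({p // p ∈ S} → ZMod ℓ)))
    (n := Ncl * Nu) (fun b _ => Finset.mem_univ _) hfib₁
  refine ⟨h1.1, h1.2.trans ?_⟩
  have hcard : (Finset.univ : Finset ({p // p ∈ S} → ZMod ℓ)).card = ℓ ^ S.card := by
    rw [Finset.card_univ, Fintype.card_fun, ZMod.card, Fintype.card_coe]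
  rw [hcard]
  calc ℓ ^ S.card * (Ncl * Nu) ≤ ℓ ^ S.card * (Ncl * ℓ ^ (NumberField.Units.rank k + 1)) := by
        exact Nat.mul_le_mul_left _ (Nat.mul_le_mul_left _ hucard)
    _ = ℓ ^ (S.card + NumberField.Units.rank k + 1) * Ncl := by
        rw [pow_add, pow_add]
        ring
end

section
/- Let ℓ be a prime and k a field of characteristic different from ℓ containing a primitive ℓ-th root of unity ζ. Let α ∈ k^× \ (k^×)^ℓ and set k̂ := k(α^{1/ℓ}). Let σ be a field automorphism of k of finite order such that k̂ is Galois over the fixed field k^{⟨σ⟩}, and let q ∈ ℕ be defined by ζ^σ = ζ^q. Then k̂/k^{⟨σ⟩} is abelian if and only if α^σ = α^q·β^ℓ for some β ∈ k. -/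
open NumberField

open Polynomial IntermediateField

section Aux
variable {F k khat : Type} [Field F] [Field k] [Field khat]
  [Algebra F k] [Algebra k khat] [Algebra F khat] [IsScalarTower F k khat]

noncomputable def myPB {x : khat} (hint : IsIntegral k x)
    (hgen : IntermediateField.adjoin k {x} = ⊤) : PowerBasis k khat :=
  (IntermediateField.adjoin.powerBasis hint).map
    ((IntermediateField.equivOfEq hgen).trans IntermediateField.topEquiv)

theorem myPB_gen {x : khat} (hint : IsIntegral k x)
    (hgen : IntermediateField.adjoin k {x} = ⊤) : (myPB hint hgen).gen = x := rfl

theorem myPB_dim {x : khat} (hint : IsIntegral k x)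
    (hgen : IntermediateField.adjoin k {x} = ⊤) :
    (myPB hint hgen).dim = (minpoly k x).natDegree := by
  simp [myPB]

theorem ringHom_ext_gen {x : khat} (hint : IsIntegral k x)
    (hgen : IntermediateField.adjoin k {x} = ⊤)
    (g₁ g₂ : khat →+* khat)
    (hk : g₁.comp (algebraMap k khat) = g₂.comp (algebraMap k khat))
    (hx : g₁ x = g₂ x) : g₁ = g₂ := by
  ext y
  obtain ⟨f, rfl⟩ := (myPB hint hgen).exists_eq_aeval' y
  rw [myPB_gen hint hgen] at *
  rw [aeval_def, Polynomial.hom_eval₂, Polynomial.hom_eval₂, hk, hx]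

end Aux


theorem dvd_of_pow_eq_pow_aux {K : Type} [Field K] {ℓ m : ℕ} (hℓ : ℓ.Prime)
    {α γ : K} (hα : α ≠ 0) (hpow : ∀ b : K, b ^ ℓ ≠ α) (h : α ^ m = γ ^ ℓ) : ℓ ∣ m := by
  by_contra hnd
  have hm0 : m ≠ 0 := by rintro rfl; exact hnd (dvd_zero ℓ)
  have hcop : Nat.Coprime m ℓ := Nat.coprime_comm.mp ((hℓ.coprime_iff_not_dvd).mpr hnd)
  obtain ⟨a, -, ha⟩ := Nat.exists_mul_mod_eq_one_of_coprime hcop hℓ.one_lt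
  have hdm : ℓ * (m * a / ℓ) + 1 = m * a := by
    conv_rhs => rw [← Nat.div_add_mod (m * a) ℓ]
    rw [ha]
  apply hpow (γ ^ a / α ^ (m * a / ℓ))
  rw [div_pow, ← pow_mul, ← pow_mul, div_eq_iff (pow_ne_zero _ hα)]
  calc γ ^ (a * ℓ) = (γ ^ ℓ) ^ a := by rw [← pow_mul, mul_comm]
    _ = (α ^ m) ^ a := by rw [h]
    _ = α ^ (ℓ * (m * a / ℓ) + 1) := by rw [← pow_mul, hdm]
    _ = α * α ^ (m * a / ℓ * ℓ) := by rw [pow_add, pow_one, mul_comm ℓ _, mul_comm]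

theorem mod_eq_mod_aux {K : Type} [Field K] {ℓ i q : ℕ} (hℓ : ℓ.Prime)
    {α c β : K} (hα : α ≠ 0) (hc : c ≠ 0) (hβ : β ≠ 0)
    (hpow : ∀ b : K, b ^ ℓ ≠ α) (h : c ^ ℓ * α ^ i = α ^ q * β ^ ℓ) : i % ℓ = q % ℓ := by
  rcases le_total q i with hle | hle
  · have h2 : α ^ (i - q) * c ^ ℓ = β ^ ℓ := by
      have h3 := h
      rw [← Nat.sub_add_cancel hle, pow_add, ← mul_assoc, mul_comm (α ^ q)] at h3
      rw [mul_comm (α ^ (i - q))]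
      exact mul_right_cancel₀ (pow_ne_zero q hα) h3
    have h1 : α ^ (i - q) = (β / c) ^ ℓ := by
      rw [div_pow, eq_div_iff (pow_ne_zero _ hc)]
      exact h2
    obtain ⟨t, ht⟩ := dvd_of_pow_eq_pow_aux hℓ hα hpow h1
    have h4 : i = q + ℓ * t := by omega
    rw [h4, Nat.add_mul_mod_self_left]
  · have h2 : α ^ (q - i) * β ^ ℓ = c ^ ℓ := by
      have h3 := h
      rw [← Nat.sub_add_cancel hle, pow_add] at h3
      rw [show α ^ (q - i) * α ^ i * β ^ ℓ = (α ^ (q - i) * β ^ ℓ) * α ^ i by ring,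
        show c ^ ℓ * α ^ i = c ^ ℓ * α ^ i from rfl] at h3
      exact (mul_right_cancel₀ (pow_ne_zero i hα) h3.symm)
    have h1 : α ^ (q - i) = (c / β) ^ ℓ := by
      rw [div_pow, eq_div_iff (pow_ne_zero _ hβ)]
      exact h2
    obtain ⟨t, ht⟩ := dvd_of_pow_eq_pow_aux hℓ hα hpow h1
    have h4 : q = i + ℓ * t := by omega
    rw [h4, Nat.add_mul_mod_self_left]


/-- Šafarevič's lemma on abelian Kummer extensions (Lemma 2.8): let `k` be a field of
characteristic different from `ℓ` containing a primitive `ℓ`-th root of unity `ζ`, let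
`α ∈ k^× \ (k^×)^ℓ` and `k̂ = k(α^{1/ℓ})`.  Let `σ` be an automorphism of `k` of finite order
with fixed field `F` such that `k̂/F` is Galois, and let `q` be defined by `ζ^σ = ζ^q`.
Then `k̂/F` is abelian if and only if `α^σ = α^q·β^ℓ` for some `β ∈ k`. -/
theorem abelian_kummer_iff (ℓ : ℕ) (hℓ : ℓ.Prime)
    (F k khat : Type) [Field F] [Field k] [Field khat]
    [Algebra F k] [Algebra k khat] [Algebra F khat] [IsScalarTower F k khat]
    (hchar : (ℓ : k) ≠ 0)
    (ζ : k) (hζ : IsPrimitiveRoot ζ ℓ)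
    (α : k) (hα : α ≠ 0) (hαpow : ∀ β : k, β ^ ℓ ≠ α)
    (x : khat) (hx : x ^ ℓ = algebraMap k khat α)
    (hgen : IntermediateField.adjoin k {x} = ⊤)
    (σ : k ≃ₐ[F] k) (hfin : IsOfFinOrder σ)
    (hfix : ∀ y : k, σ y = y → y ∈ (algebraMap F k).range)
    (hGal : IsGalois F khat)
    (q : ℕ) (hq : σ ζ = ζ ^ q) :
    (∀ g h : khat ≃ₐ[F] khat, g * h = h * g) ↔ ∃ β : k, σ α = α ^ q * β ^ ℓ := by

  classical
  haveI : NeZero ℓ := ⟨hℓ.ne_zero⟩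
  set ι := algebraMap k khat with hι
  have hinj : Function.Injective ι := (algebraMap k khat).injective
  have hx0 : x ≠ 0 := by
    intro h
    apply hα
    apply hinj
    rw [map_zero, ← hx, h, zero_pow hℓ.ne_zero]
  have hζ' : IsPrimitiveRoot (ι ζ) ℓ := hζ.map_of_injective hinj
  -- minimal polynomial of x
  have hirr : Irreducible (X ^ ℓ - C α) := X_pow_sub_C_irreducible_of_prime hℓ hαpow
  have haev : (Polynomial.aeval x) (X ^ ℓ - C α) = 0 := by
    simp [hx, hι]
  have hint : IsIntegral k x :=
    ⟨X ^ ℓ - C α, monic_X_pow_sub_C α hℓ.ne_zero, by simpa [aeval_def] using haev⟩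
  have hmin : minpoly k x = X ^ ℓ - C α :=
    (minpoly.eq_of_irreducible_of_monic hirr haev (monic_X_pow_sub_C α hℓ.ne_zero)).symm
  -- power basis and dimension
  let pb : PowerBasis k khat := myPB hint hgen
  haveI : FiniteDimensional k khat := pb.finite
  have hdim : Module.finrank k khat = ℓ := by
    rw [pb.finrank, myPB_dim hint hgen, hmin]
    simp [natDegree_X_pow_sub_C]
  -- the generator of Gal(khat/k)
  have hζxroot : (Polynomial.aeval (ι ζ * x)) (minpoly k pb.gen) = 0 := by
    rw [myPB_gen hint hgen, hmin]
    have : (ι ζ * x) ^ ℓ = ι α := by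
      rw [mul_pow, ← map_pow, hζ.pow_eq_one, map_one, one_mul, hx]
    simp [this]
    exact sub_self _
  let τh : khat →ₐ[k] khat := pb.lift (ι ζ * x) hζxroot
  have hτbij : Function.Bijective τh := by
    have hinj' : Function.Injective τh := τh.toRingHom.injective
    exact ⟨hinj', (LinearMap.injective_iff_surjective (f := τh.toLinearMap)).mp hinj'⟩
  let τ₀ : khat ≃ₐ[k] khat := AlgEquiv.ofBijective τh hτbij
  have hτx : τ₀ x = ι ζ * x := by
    show τh x = ι ζ * x
    conv_lhs => rw [← myPB_gen hint hgen]
    exact pb.lift_gen _ hζxroot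
  -- finite dimensionality of k over F via Artin
  haveI hGfin : Finite (Subgroup.zpowers σ) := by
    have := hfin.finite_zpowers
    exact this.to_subtype
  have hsub : (FixedPoints.subfield (Subgroup.zpowers σ) k) = (algebraMap F k).fieldRange := by
    ext y
    constructor
    · intro hy
      have h1 : σ y = y := hy ⟨σ, Subgroup.mem_zpowers σ⟩
      obtain ⟨a, ha⟩ := hfix y h1
      exact ⟨a, ha⟩
    · rintro ⟨a, rfl⟩ g
      exact (g : k ≃ₐ[F] k).commutes a
  haveI hFD0 : FiniteDimensional ((algebraMap F k).fieldRange) k := hsub ▸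
    (inferInstance : FiniteDimensional (FixedPoints.subfield (Subgroup.zpowers σ) k) k)
  haveI hFDk : FiniteDimensional F k := by
    obtain ⟨S, hS⟩ := Module.Finite.fg_top (R := (algebraMap F k).fieldRange) (M := k)
    refine ⟨⟨S, ?_⟩⟩
    rw [eq_top_iff]
    intro y _
    have hy : y ∈ Submodule.span ((algebraMap F k).fieldRange) (S : Set k) := by
      rw [hS]; trivial
    refine Submodule.span_induction (fun z hz => Submodule.subset_span hz)
      (Submodule.zero_mem _) (fun _ _ _ _ h1 h2 => Submodule.add_mem _ h1 h2) ?_ hy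
    rintro ⟨w, a, rfl⟩ z _ hz
    have : (⟨algebraMap F k a, a, rfl⟩ : (algebraMap F k).fieldRange) • z = a • z := by
      rw [Algebra.smul_def, Algebra.smul_def]
      rfl
    rw [this]
    exact Submodule.smul_mem _ a hz
  haveI : FiniteDimensional F khat := Module.Finite.trans k khat
  -- fixed fields
  have hffbot : ∀ (H : Subgroup (k ≃ₐ[F] k)), σ ∈ H →
      IntermediateField.fixedField H = ⊥ := by
    intro H hσH
    apply le_antisymm
    · intro y hy
      have h1 : σ y = y := hy ⟨σ, hσH⟩
      rw [IntermediateField.mem_bot]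
      obtain ⟨a, ha⟩ := hfix y h1
      exact ⟨a, ha⟩
    · intro y hy
      rw [IntermediateField.mem_bot] at hy
      obtain ⟨a, rfl⟩ := hy
      intro g
      exact (g : k ≃ₐ[F] k).commutes a
  haveI hGalk : IsGalois F k :=
    IsGalois.of_fixedField_eq_bot F k (hffbot ⊤ (Subgroup.mem_top σ))
  haveI hGalkk : IsGalois k khat := IsGalois.tower_top_of_isGalois F k khat
  have hzpσ : Subgroup.zpowers σ = ⊤ := by
    have h1 := IntermediateField.fixingSubgroup_fixedField (Subgroup.zpowers σ)
      (F := F) (E := k)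
    rw [hffbot _ (Subgroup.mem_zpowers σ), IntermediateField.fixingSubgroup_bot] at h1
    exact h1.symm
  -- Galois group of khat / k
  have hτ0ne : τ₀ ≠ 1 := by
    intro h
    have h1 : τ₀ x = x := by rw [h]; rfl
    rw [hτx] at h1
    have h2 : ι ζ = 1 := mul_right_cancel₀ hx0 (h1.trans (one_mul x).symm)
    exact hζ.ne_one hℓ.one_lt (hinj (by rwa [map_one]))
  have hzpτ : Subgroup.zpowers τ₀ = ⊤ := by
    apply Subgroup.eq_top_of_card_eq
    rw [Nat.card_zpowers]
    have hcard : Nat.card (khat ≃ₐ[k] khat) = ℓ := by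
      rw [← hdim, ← IsGalois.card_aut_eq_finrank, Nat.card_eq_fintype_card]
    rw [hcard]
    have h1 : orderOf τ₀ ∣ ℓ := by
      rw [← hcard]
      exact orderOf_dvd_natCard τ₀
    rcases (Nat.Prime.eq_one_or_self_of_dvd hℓ _ h1) with h | h
    · exact absurd (orderOf_eq_one_iff.mp h) hτ0ne
    · exact h
  -- eigenvector decomposition
  have key : ∀ y : khat, y ≠ 0 → ∀ γ : k, y ^ ℓ = ι γ →
      ∃ c : k, ∃ i : ℕ, y = ι c * x ^ i := by
    intro y hy0 γ hyγ
    have hγ0 : ι γ ≠ 0 := by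
      rw [← hyγ]
      exact pow_ne_zero _ hy0
    have h1 : (τ₀ y / y) ^ ℓ = 1 := by
      have h2 : (τ₀ y) ^ ℓ = ι γ := by
        rw [← map_pow, hyγ]
        exact τ₀.commutes γ
      rw [div_pow, h2, hyγ, div_self hγ0]
    obtain ⟨i, hiℓ, hi⟩ := hζ'.eq_pow_of_pow_eq_one h1
    have hτy : τ₀ y = (ι ζ) ^ i * y := by
      rw [hi, div_mul_cancel₀ _ hy0]
    set z := y / x ^ i with hz
    have hτz : τ₀ z = z := by
      rw [hz, map_div₀, map_pow, hτx, hτy, mul_pow]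
      have hζne : (ι ζ) ^ i ≠ 0 := by
        apply pow_ne_zero
        rw [Ne, _root_.map_eq_zero]
        exact hζ.ne_zero hℓ.ne_zero
      rw [mul_div_mul_left _ _ hζne]
    have hzfix : ∀ g : khat ≃ₐ[k] khat, g z = z := by
      intro g
      have hst : Subgroup.zpowers τ₀ ≤ MulAction.stabilizer (khat ≃ₐ[k] khat) z := by
        rw [Subgroup.zpowers_le]
        exact hτz
      have : g ∈ MulAction.stabilizer (khat ≃ₐ[k] khat) z :=
        hst (hzpτ ▸ Subgroup.mem_top g)
      exact this
    have hzbot : z ∈ (⊥ : IntermediateField k khat) := by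
      have h2 : z ∈ IntermediateField.fixedField (⊤ : Subgroup (khat ≃ₐ[k] khat)) := by
        intro g
        exact hzfix g
      have h3 : IntermediateField.fixedField (⊤ : Subgroup (khat ≃ₐ[k] khat)) = ⊥ := by
        rw [← IntermediateField.fixingSubgroup_bot (F := k) (E := khat)]
        exact IsGalois.fixedField_fixingSubgroup ⊥
      rwa [h3] at h2
    rw [IntermediateField.mem_bot] at hzbot
    obtain ⟨c, hc⟩ := hzbot
    refine ⟨c, i, ?_⟩
    show y = ι c * x ^ i
    rw [hc, hz, div_mul_cancel₀ _ (pow_ne_zero _ hx0)]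
  -- lift of σ to khat
  haveI : Normal F k := hGalk.to_normal
  haveI : Normal F khat := hGal.to_normal
  obtain ⟨σt, hσt⟩ := AlgEquiv.restrictNormalHom_surjective (F := F) (K₁ := k) (E := khat) σ
  have hσtk : ∀ c : k, σt (ι c) = ι (σ c) := by
    intro c
    have h1 := AlgEquiv.restrictNormal_commutes σt k c
    rw [show σt.restrictNormal k = σ from hσt] at h1
    exact h1.symm
  have hσtxℓ : (σt x) ^ ℓ = ι (σ α) := by
    rw [← map_pow, hx, hσtk]
  have hσtx0 : σt x ≠ 0 := fun h => hx0 (by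
    have := σt.injective (a₁ := x) (a₂ := 0)
    exact this (by rw [h, map_zero]))
  obtain ⟨c, i, hci⟩ := key (σt x) hσtx0 (σ α) hσtxℓ
  have hc0 : c ≠ 0 := by
    intro h
    rw [h, map_zero, zero_mul] at hci
    exact hσtx0 hci
  have hσα : σ α = c ^ ℓ * α ^ i := by
    apply hinj
    rw [← hσtxℓ, hci, mul_pow, ← pow_mul, mul_comm i ℓ, pow_mul, hx, ← map_pow, ← map_pow,
      ← map_mul]
  -- the F-linear version of τ₀
  let τF : khat ≃ₐ[F] khat := τ₀.restrictScalars F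
  have hτF : ∀ y, τF y = τ₀ y := fun _ => rfl
  have hτ0k : ∀ c' : k, τ₀ (ι c') = ι c' := fun c' => τ₀.commutes c'
  have hcx0 : ι c * x ^ i ≠ 0 :=
    mul_ne_zero (fun h => hc0 (hinj (by rwa [map_zero]))) (pow_ne_zero _ hx0)
  have hζpow : ∀ a b : ℕ, a % ℓ = b % ℓ → (ι ζ) ^ a = (ι ζ) ^ b := by
    have hmod : ∀ a : ℕ, (ι ζ) ^ a = (ι ζ) ^ (a % ℓ) := by
      intro a
      conv_lhs => rw [← Nat.div_add_mod a ℓ]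
      rw [pow_add, pow_mul, hζ'.pow_eq_one, one_pow, one_mul]
    intro a b hab
    rw [hmod a, hmod b, hab]
  -- computations of the two composites on x
  have hcomp1 : σt (τF x) = (ι ζ) ^ q * (ι c * x ^ i) := by
    rw [hτF, hτx, map_mul, hσtk, hq, map_pow, hci]
  have hcomp2 : τF (σt x) = (ι ζ) ^ i * (ι c * x ^ i) := by
    rw [hci, hτF, map_mul, map_pow, hτx, hτ0k, mul_pow]
    ring
  constructor
  · -- abelian → formula
    intro hab
    have h1 : σt (τF x) = τF (σt x) := by
      have h2 := hab σt τF
      calc σt (τF x) = (σt * τF) x := rfl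
        _ = (τF * σt) x := by rw [h2]
        _ = τF (σt x) := rfl
    rw [hcomp1, hcomp2] at h1
    have h3 : (ι ζ) ^ q = (ι ζ) ^ i := mul_right_cancel₀ hcx0 h1
    have hmod : q % ℓ = i % ℓ := by
      have hq' : (ι ζ) ^ (q % ℓ) = (ι ζ) ^ (i % ℓ) := by
        rw [hζpow (q % ℓ) q (Nat.mod_mod_of_dvd q dvd_rfl), h3,
          hζpow i (i % ℓ) (Nat.mod_mod_of_dvd i dvd_rfl).symm]
      exact hζ'.pow_inj (Nat.mod_lt _ hℓ.pos) (Nat.mod_lt _ hℓ.pos) hq'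
    refine ⟨c * α ^ (i / ℓ) / α ^ (q / ℓ), ?_⟩
    have hexp : q + i / ℓ * ℓ = i + q / ℓ * ℓ := by
      have h4 : i % ℓ + i / ℓ * ℓ = i := Nat.mod_add_div' i ℓ
      have h5 : q % ℓ + q / ℓ * ℓ = q := Nat.mod_add_div' q ℓ
      calc q + i / ℓ * ℓ = q % ℓ + q / ℓ * ℓ + i / ℓ * ℓ := by rw [h5]
        _ = i % ℓ + i / ℓ * ℓ + q / ℓ * ℓ := by rw [hmod]; ring
        _ = i + q / ℓ * ℓ := by rw [h4]
    have key2 : α ^ q * (c * α ^ (i / ℓ)) ^ ℓ = (c ^ ℓ * α ^ i) * (α ^ (q / ℓ)) ^ ℓ := by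
      rw [mul_pow, ← pow_mul, ← pow_mul]
      calc α ^ q * (c ^ ℓ * α ^ (i / ℓ * ℓ)) = c ^ ℓ * α ^ (q + i / ℓ * ℓ) := by
            rw [pow_add]; ring
        _ = c ^ ℓ * α ^ (i + q / ℓ * ℓ) := by rw [hexp]
        _ = c ^ ℓ * α ^ i * α ^ (q / ℓ * ℓ) := by rw [pow_add]; ring
    have hfin' : α ^ q * ((c * α ^ (i / ℓ)) ^ ℓ / (α ^ (q / ℓ)) ^ ℓ) = c ^ ℓ * α ^ i := by
      rw [← mul_div_assoc, key2, mul_div_cancel_right₀ _ (pow_ne_zero _ (pow_ne_zero _ hα))]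
    rw [hσα, div_pow]
    exact hfin'.symm
  · -- formula → abelian
    rintro ⟨β, hβ⟩
    -- β is nonzero
    have hβ0 : β ≠ 0 := by
      intro h
      rw [h, zero_pow hℓ.ne_zero, mul_zero] at hβ
      exact hα (by simpa using σ.injective (a₁ := α) (a₂ := 0) (by simpa using hβ))
    -- i ≡ q mod ℓ via the group kˣ/(kˣ)^ℓ
    have hmod : i % ℓ = q % ℓ :=
      mod_eq_mod_aux hℓ hα hc0 hβ0 hαpow (hσα.symm.trans hβ)
    have hζiq : (ι ζ) ^ i = (ι ζ) ^ q := hζpow i q hmod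
    -- σt and τF commute
    have hcomm : τF * σt = σt * τF := by
      have hrh : ((τF * σt : khat ≃ₐ[F] khat) : khat →+* khat)
          = ((σt * τF : khat ≃ₐ[F] khat) : khat →+* khat) := by
        apply ringHom_ext_gen hint hgen
        · ext c'
          show τF (σt (ι c')) = σt (τF (ι c'))
          rw [hσtk, hτF, hτ0k, hτF, hτ0k, hσtk]
        · show τF (σt x) = σt (τF x)
          rw [hcomp1, hcomp2, hζiq]
      exact AlgEquiv.ext fun y => RingHom.congr_fun hrh y
    -- powers of τF agree with powers of τ₀
    have hpowτ : ∀ (j : ℕ) (y : khat), (τF ^ j) y = (τ₀ ^ j) y := by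
      intro j
      induction j with
      | zero => intro y; rfl
      | succ n ih =>
        intro y
        rw [pow_succ, pow_succ, AlgEquiv.mul_apply, AlgEquiv.mul_apply, ih, hτF]
    -- every element decomposes
    have hdecomp : ∀ g : khat ≃ₐ[F] khat, ∃ a b : ℕ, g = τF ^ a * σt ^ b := by
      intro g
      have hgk : AlgEquiv.restrictNormalHom k g ∈ Subgroup.zpowers σ :=
        hzpσ ▸ Subgroup.mem_top _
      rw [← hfin.mem_powers_iff_mem_zpowers, Submonoid.mem_powers_iff] at hgk
      obtain ⟨b, hb⟩ := hgk
      set h := g * (σt ^ b)⁻¹ with hh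
      have hrh : AlgEquiv.restrictNormalHom k h = 1 := by
        rw [hh, map_mul, map_inv, map_pow, hσt, hb, mul_inv_cancel]
      have hhk : ∀ c' : k, h (ι c') = ι c' := by
        intro c'
        have h1 := AlgEquiv.restrictNormal_commutes h k c'
        rw [show h.restrictNormal k = 1 from hrh] at h1
        simpa using h1.symm
      let h' : khat ≃ₐ[k] khat := AlgEquiv.ofRingEquiv (f := h.toRingEquiv) hhk
      have hh' : h' ∈ Subgroup.zpowers τ₀ := hzpτ ▸ Subgroup.mem_top h'
      rw [← (isOfFinOrder_of_finite τ₀).mem_powers_iff_mem_zpowers,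
        Submonoid.mem_powers_iff] at hh'
      obtain ⟨a, ha⟩ := hh'
      refine ⟨a, b, ?_⟩
      have hgh : g = h * σt ^ b := by
        rw [hh, inv_mul_cancel_right]
      rw [hgh]
      congr 1
      apply AlgEquiv.ext
      intro y
      have h2 : h y = h' y := rfl
      rw [h2, ← ha, hpowτ]
    -- conclude
    intro g h
    obtain ⟨a, b, rfl⟩ := hdecomp g
    obtain ⟨a', b', rfl⟩ := hdecomp h
    have h1 : Commute τF σt := hcomm
    have c1 : Commute (τF ^ a) (τF ^ a') := (Commute.refl τF).pow_pow _ _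
    have c2 : Commute (τF ^ a) (σt ^ b') := h1.pow_pow _ _
    have c3 : Commute (σt ^ b) (τF ^ a') := h1.symm.pow_pow _ _
    have c4 : Commute (σt ^ b) (σt ^ b') := (Commute.refl σt).pow_pow _ _
    exact ((c1.mul_left c3).mul_right (c2.mul_left c4) : _)
end
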